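/- arXiv:1703.10127 — 4 statements merged into one kernel-verified Lean document; each statement's English description precedes it below -/
import Mathlib

section
/- If a mechanism M satisfies (ε,0)-differential privacy, then for all neighboring inputs D, D' and all α ∈ (1,∞), the α-Rényi divergence satisfies D_α(M(D) || M(D')) ≤ (ε²/2)·α; i.e., M satisfies (ε²/2)-zCDP. -/
open Finset Real

lemma sinh_le_mul_cosh {x : ℝ} (hx : 0 ≤ x) : Real.sinh x ≤ x * Real.cosh x := by
  have hmono : MonotoneOn (fun t : ℝ => t * Real.cosh t - Real.sinh t) (Set.Ici 0) := by
    apply monotoneOn_of_deriv_nonneg (convex_Ici 0)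
    · fun_prop
    · apply Differentiable.differentiableOn; fun_prop
    · intro t ht
      have hd : HasDerivAt (fun t : ℝ => t * Real.cosh t - Real.sinh t) (t * Real.sinh t) t := by
        have h1 := (hasDerivAt_id t).mul (Real.hasDerivAt_cosh t)
        have h2 := h1.sub (Real.hasDerivAt_sinh t)
        exact h2.congr_deriv (by simp only [id_eq, one_mul]; ring)
      rw [hd.deriv]
      have ht' : 0 < t := by simpa using ht
      exact mul_nonneg ht'.le ((Real.sinh_nonneg_iff.mpr ht'.le))
  have h0 := hmono (Set.self_mem_Ici) (Set.mem_Ici.mpr hx) hx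
  simp at h0
  linarith

lemma cosh_div_cosh_le {s t : ℝ} (hs : 0 ≤ s) (hst : s ≤ t) :
    Real.cosh t / Real.cosh s ≤ Real.exp ((t ^ 2 - s ^ 2) / 2) := by
  have hmono : MonotoneOn (fun x : ℝ => x ^ 2 / 2 - Real.log (Real.cosh x)) (Set.Ici 0) := by
    apply monotoneOn_of_deriv_nonneg (convex_Ici 0)
    · apply ContinuousOn.sub (by fun_prop)
      exact (Real.continuous_cosh.continuousOn).log (fun x _ => ((Real.cosh_pos _)).ne')
    · apply Differentiable.differentiableOn
      intro x
      exact ((differentiable_pow 2 x).div_const 2).sub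
        ((Real.differentiable_cosh x).log ((Real.cosh_pos _)).ne')
    · intro x hx
      have hx' : 0 < x := by simpa using hx
      have hd : HasDerivAt (fun x : ℝ => x ^ 2 / 2 - Real.log (Real.cosh x))
          (x - Real.sinh x / Real.cosh x) x := by
        have h1 : HasDerivAt (fun x : ℝ => x ^ 2 / 2) x x := by
          have := (hasDerivAt_pow 2 x).div_const 2
          exact this.congr_deriv (by norm_num)
        have h2 := (Real.hasDerivAt_cosh x).log ((Real.cosh_pos _)).ne'
        exact h1.sub h2
      rw [hd.deriv, sub_nonneg, div_le_iff₀ (Real.cosh_pos _)]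
      exact sinh_le_mul_cosh hx'.le
  have h := hmono (Set.mem_Ici.mpr hs) (Set.mem_Ici.mpr (hs.trans hst)) hst
  simp only [sub_le_sub_iff] at h
  have hlog : Real.log (Real.cosh t / Real.cosh s) ≤ (t ^ 2 - s ^ 2) / 2 := by
    rw [Real.log_div (Real.cosh_pos _).ne' (Real.cosh_pos _).ne']
    linarith
  calc Real.cosh t / Real.cosh s
      = Real.exp (Real.log (Real.cosh t / Real.cosh s)) :=
        (Real.exp_log (div_pos (Real.cosh_pos _) (Real.cosh_pos _))).symm
    _ ≤ _ := Real.exp_le_exp.mpr hlog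


/-- If the output distributions `P, Q` of a mechanism on two neighboring inputs satisfy the
pointwise `(ε,0)`-differential privacy guarantee, then for every `α > 1` the α-Rényi divergence
`D_α(P‖Q)` is at most `(ε²/2)·α`; i.e., `(ε,0)`-DP implies `(ε²/2)`-zCDP. -/
theorem stmt_11 {O : Type*} [Fintype O] (ε : ℝ) (hε : 0 ≤ ε)
    (P Q : O → ℝ) (hP0 : ∀ x, 0 < P x) (hQ0 : ∀ x, 0 < Q x)
    (hP1 : ∑ x : O, P x = 1) (hQ1 : ∑ x : O, Q x = 1)
    (hPQ : ∀ x, P x ≤ Real.exp ε * Q x) (hQP : ∀ x, Q x ≤ Real.exp ε * P x) :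
    ∀ α : ℝ, 1 < α →
      (1 / (α - 1)) * Real.log (∑ x : O, P x ^ α * Q x ^ (1 - α)) ≤ (ε^2 / 2) * α := by
  intro α hα
  rcases eq_or_lt_of_le hε with hε0 | hε0
  · -- ε = 0 case: P = Q
    have hPQ' : P = Q := by
      funext x
      have h1 := hPQ x; have h2 := hQP x
      rw [← hε0, Real.exp_zero, one_mul] at h1 h2
      linarith
    subst hPQ'
    have : ∑ x : O, P x ^ α * P x ^ (1 - α) = 1 := by
      have heach : ∀ x : O, P x ^ α * P x ^ (1 - α) = P x := by
        intro x
        rw [← Real.rpow_add (hP0 x)]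
        norm_num
      rw [Finset.sum_congr rfl (fun x _ => heach x), hP1]
    rw [this, Real.log_one, mul_zero, ← hε0]
    positivity
  · -- ε > 0 case
    set m := Real.exp (-ε) with hm
    set M := Real.exp ε with hM
    have hmpos : 0 < m := Real.exp_pos _
    have hMpos : 0 < M := Real.exp_pos _
    have hmM : m < M := Real.exp_lt_exp.mpr (by linarith)
    have hMm : 0 < M - m := by linarith
    -- pointwise bound
    have key : ∀ x : O, P x ^ α * Q x ^ (1 - α) ≤
        ((M * Q x - P x) * m ^ α + (P x - m * Q x) * M ^ α) / (M - m) := by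
      intro x
      have hpx := hP0 x; have hqx := hQ0 x
      set y := P x / Q x with hy
      have hym : m ≤ y := by
        rw [hy, le_div_iff₀ hqx]
        have h := hQP x
        have hmm1 : m * M = 1 := by rw [hm, hM, ← Real.exp_add]; simp
        nlinarith [mul_le_mul_of_nonneg_left h hmpos.le]
      have hyM : y ≤ M := by
        rw [hy, div_le_iff₀ hqx]
        exact hPQ x
      have ha : 0 ≤ (M - y) / (M - m) := div_nonneg (by linarith) hMm.le
      have hb : 0 ≤ (y - m) / (M - m) := div_nonneg (by linarith) hMm.le
      have hab : (M - y) / (M - m) + (y - m) / (M - m) = 1 := by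
        field_simp
        ring
      have hconv := (convexOn_rpow (le_of_lt hα)).2 (Set.mem_Ici.mpr hmpos.le)
        (Set.mem_Ici.mpr hMpos.le) ha hb hab
      simp only [smul_eq_mul] at hconv
      have hy_eq : (M - y) / (M - m) * m + (y - m) / (M - m) * M = y := by
        field_simp
        ring
      have hid : P x ^ α * Q x ^ (1 - α) = Q x * y ^ α := by
        rw [hy, Real.div_rpow hpx.le hqx.le, Real.rpow_sub hqx, Real.rpow_one]
        have h1 : Q x ^ α ≠ 0 := (Real.rpow_pos_of_pos hqx α).ne'
        field_simp
      rw [hid]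
      have hyb : y ^ α ≤ ((M - y) * m ^ α + (y - m) * M ^ α) / (M - m) := by
        calc y ^ α = ((M - y) / (M - m) * m + (y - m) / (M - m) * M) ^ α := by rw [hy_eq]
          _ ≤ (M - y) / (M - m) * m ^ α + (y - m) / (M - m) * M ^ α := hconv
          _ = ((M - y) * m ^ α + (y - m) * M ^ α) / (M - m) := by
              field_simp
      calc Q x * y ^ α ≤ Q x * (((M - y) * m ^ α + (y - m) * M ^ α) / (M - m)) :=
            mul_le_mul_of_nonneg_left hyb hqx.le
        _ = ((M * Q x - P x) * m ^ α + (P x - m * Q x) * M ^ α) / (M - m) := by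
            rw [hy]
            field_simp
    -- sum the bounds
    have hne : (Finset.univ : Finset O).Nonempty :=
      Finset.nonempty_iff_ne_empty.mpr (fun h => by simp [h] at hP1)
    have hT : 0 < ∑ x : O, P x ^ α * Q x ^ (1 - α) :=
      Finset.sum_pos (fun x _ => mul_pos (Real.rpow_pos_of_pos (hP0 x) α)
        (Real.rpow_pos_of_pos (hQ0 x) _)) hne
    have hsum_le : ∑ x : O, P x ^ α * Q x ^ (1 - α) ≤
        ((M - 1) * m ^ α + (1 - m) * M ^ α) / (M - m) := by
      calc ∑ x : O, P x ^ α * Q x ^ (1 - α)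
          ≤ ∑ x : O, ((M * Q x - P x) * m ^ α + (P x - m * Q x) * M ^ α) / (M - m) :=
            Finset.sum_le_sum (fun x _ => key x)
        _ = ((M - 1) * m ^ α + (1 - m) * M ^ α) / (M - m) := by
            rw [← Finset.sum_div]
            congr 1
            rw [Finset.sum_add_distrib]
            simp only [sub_mul, Finset.sum_sub_distrib, ← Finset.sum_mul, ← Finset.mul_sum,
              mul_comm]
            rw [hP1, hQ1]
            ring
    -- identify with a cosh ratio
    set b := Real.exp (ε * (1 / 2)) with hbdef
    set c := Real.exp (ε * (α - 1 / 2)) with hcdef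
    have hbpos : 0 < b := Real.exp_pos _
    have hcpos : 0 < c := Real.exp_pos _
    have hMb : M = b * b := by rw [hM, hbdef, ← Real.exp_add]; ring_nf
    have hb1 : 1 < b := by
      rw [hbdef]; exact Real.one_lt_exp_iff.mpr (by linarith)
    have hmb : m = 1 / (b * b) := by
      rw [← hMb, hm, hM, Real.exp_neg, one_div]
    have hMα : M ^ α = c * b := by
      rw [hM, ← Real.exp_mul, hbdef, hcdef, ← Real.exp_add]; ring_nf
    have hmα : m ^ α = 1 / (c * b) := by
      rw [eq_div_iff (by positivity : c * b ≠ (0:ℝ)), hm, ← Real.exp_mul, hcdef, hbdef,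
        ← Real.exp_add, ← Real.exp_add,
        show -ε * α + (ε * (α - 1 / 2) + ε * (1 / 2)) = 0 by ring]
      exact Real.exp_zero
    have hco : ((M - 1) * m ^ α + (1 - m) * M ^ α) / (M - m)
        = Real.cosh (ε * (α - 1 / 2)) / Real.cosh (ε * (1 / 2)) := by
      rw [hMα, hmα, hMb, hmb, Real.cosh_eq, Real.cosh_eq, Real.exp_neg, Real.exp_neg,
        ← hbdef, ← hcdef]
      have hMm' : b * b - 1 / (b * b) ≠ 0 := by
        have : m < M := hmM
        rw [hMb, hmb] at this
        linarith
      have hd2 : (b + b⁻¹) / 2 ≠ 0 := by positivity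
      rw [div_eq_div_iff hMm' hd2]
      field_simp
      ring
    have hcosh_le : Real.cosh (ε * (α - 1 / 2)) / Real.cosh (ε * (1 / 2)) ≤
        Real.exp (ε ^ 2 / 2 * (α * (α - 1))) := by
      have hs : 0 ≤ ε * (1 / 2) := by positivity
      have hst : ε * (1 / 2) ≤ ε * (α - 1 / 2) := by nlinarith
      have h := cosh_div_cosh_le hs hst
      convert h using 2
      ring
    have hlog : Real.log (∑ x : O, P x ^ α * Q x ^ (1 - α)) ≤ ε ^ 2 / 2 * (α * (α - 1)) := by
      rw [Real.log_le_iff_le_exp hT]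
      calc ∑ x : O, P x ^ α * Q x ^ (1 - α)
          ≤ ((M - 1) * m ^ α + (1 - m) * M ^ α) / (M - m) := hsum_le
        _ = Real.cosh (ε * (α - 1 / 2)) / Real.cosh (ε * (1 / 2)) := hco
        _ ≤ Real.exp (ε ^ 2 / 2 * (α * (α - 1))) := hcosh_le
    have hα1 : (0:ℝ) < α - 1 := by linarith
    calc (1 / (α - 1)) * Real.log (∑ x : O, P x ^ α * Q x ^ (1 - α))
        ≤ (1 / (α - 1)) * (ε ^ 2 / 2 * (α * (α - 1))) :=
          mul_le_mul_of_nonneg_left hlog (by positivity)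
      _ = (ε ^ 2 / 2) * α := by field_simp
end

section
/- If a mechanism M satisfies ρ-zCDP, then M satisfies (ρ + 2√(ρ log(1/δ)), δ)-differential privacy for every δ > 0. -/
open Finset

private lemma arith_key (ρ s L l : ℝ) (hρ0 : 0 < ρ) (hs0 : 0 < s) (hs2 : s ^ 2 = ρ * L)
    (hB : -L - s < (s / (ρ + s)) * l) : s + (s / (ρ + s)) * l ≤ (ρ + 2 * s) + l := by
  have hρs : 0 < ρ + s := by linarith
  have e1 : (s / (ρ + s)) * l * (ρ + s) = s * l := by field_simp
  have h1 : (-L - s) * (ρ + s) < s * l := by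
    have := mul_lt_mul_of_pos_right hB hρs
    rwa [e1] at this
  have h3 : ρ * (-l) < (ρ + s) ^ 2 := by
    nlinarith [mul_lt_mul_of_pos_left h1 hρ0, mul_pos hρ0 hs0]
  have h9 : (s / (ρ + s)) * l = s * l / (ρ + s) := by ring
  have h8 : s * l / (ρ + s) ≤ ρ + s + l := by
    rw [div_le_iff₀ hρs]; nlinarith
  rw [h9]; linarith

private lemma holder_key {O : Type*} [Fintype O] (ρ : ℝ)
    (P Q : O → ℝ) (hP0 : ∀ x, 0 < P x) (hQ0 : ∀ x, 0 < Q x)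
    (hzCDP : ∀ α : ℝ, 1 < α →
      (1 / (α - 1)) * Real.log (∑ x : O, P x ^ α * Q x ^ (1 - α)) ≤ ρ * α)
    (hO : Nonempty O) (S : Finset O) (α : ℝ) (hα : 1 < α) :
    ∑ x ∈ S, P x ≤ Real.exp (ρ * (α - 1)) * (∑ x ∈ S, Q x) ^ ((α - 1) / α) := by
  have hα0 : (0:ℝ) < α := lt_trans one_pos hα
  have hα1 : (0:ℝ) < α - 1 := sub_pos.2 hα
  have hpq : α.HolderConjugate (α / (α - 1)) := Real.HolderConjugate.conjExponent hα
  set f : O → ℝ := fun x => P x * Q x ^ ((1 - α) / α) with hf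
  set g : O → ℝ := fun x => Q x ^ ((α - 1) / α) with hg
  have hfg : ∀ x, f x * g x = P x := by
    intro x
    rw [hf, hg]
    simp only
    rw [mul_assoc, ← Real.rpow_add (hQ0 x),
      show (1 - α)/α + (α - 1)/α = 0 by field_simp; ring, Real.rpow_zero, mul_one]
  have hfp : ∀ x, f x ^ α = P x ^ α * Q x ^ (1 - α) := by
    intro x
    rw [hf]
    simp only
    rw [Real.mul_rpow (hP0 x).le (Real.rpow_nonneg (hQ0 x).le _),
      ← Real.rpow_mul (hQ0 x).le, div_mul_cancel₀ _ hα0.ne']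
  have hgq : ∀ x, g x ^ (α / (α - 1)) = Q x := by
    intro x
    rw [hg]
    simp only
    rw [← Real.rpow_mul (hQ0 x).le, div_mul_div_comm, mul_comm (α - 1) α,
      div_self (by positivity), Real.rpow_one]
  have holder := Real.inner_le_Lp_mul_Lq_of_nonneg (s := S) (f := f) (g := g) hpq
    (fun i _ => mul_nonneg (hP0 i).le (Real.rpow_nonneg (hQ0 i).le _))
    (fun i _ => Real.rpow_nonneg (hQ0 i).le _)
  simp only [hfg] at holder
  simp only [hfp, hgq] at holder
  refine holder.trans ?_
  have hT : (0:ℝ) < ∑ x : O, P x ^ α * Q x ^ (1 - α) :=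
    Finset.sum_pos (fun x _ => mul_pos (Real.rpow_pos_of_pos (hP0 x) _)
      (Real.rpow_pos_of_pos (hQ0 x) _)) Finset.univ_nonempty
  have hsub : ∑ x ∈ S, P x ^ α * Q x ^ (1 - α) ≤ ∑ x : O, P x ^ α * Q x ^ (1 - α) :=
    Finset.sum_le_sum_of_subset_of_nonneg (Finset.subset_univ S)
      (fun x _ _ => (mul_pos (Real.rpow_pos_of_pos (hP0 x) _)
        (Real.rpow_pos_of_pos (hQ0 x) _)).le)
  have hlog : Real.log (∑ x : O, P x ^ α * Q x ^ (1 - α)) ≤ ρ * α * (α - 1) := by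
    have := hzCDP α hα
    rw [div_mul_eq_mul_div, one_mul, div_le_iff₀ hα1] at this
    linarith
  have hTle : ∑ x : O, P x ^ α * Q x ^ (1 - α) ≤ Real.exp (ρ * α * (α - 1)) :=
    (Real.log_le_iff_le_exp hT).mp hlog
  have h1 : (∑ x ∈ S, P x ^ α * Q x ^ (1 - α)) ^ (1/α) ≤ Real.exp (ρ * (α - 1)) := by
    calc (∑ x ∈ S, P x ^ α * Q x ^ (1 - α)) ^ (1/α)
        ≤ (Real.exp (ρ * α * (α - 1))) ^ (1/α) := by
          apply Real.rpow_le_rpow (Finset.sum_nonneg fun x _ =>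
            (mul_pos (Real.rpow_pos_of_pos (hP0 x) _) (Real.rpow_pos_of_pos (hQ0 x) _)).le)
            (hsub.trans hTle) (by positivity)
      _ = Real.exp (ρ * (α - 1)) := by
          rw [← Real.exp_mul]
          congr 1
          field_simp
  have h2 : (1 : ℝ) / (α / (α - 1)) = (α - 1) / α := by
    rw [one_div_div]
  rw [h2]
  exact mul_le_mul_of_nonneg_right h1 (Real.rpow_nonneg
    (Finset.sum_nonneg fun x _ => (hQ0 x).le) _)

/-- If the output distributions `P, Q` of a mechanism on neighboring inputs satisfy the
`ρ`-zCDP Rényi divergence bound `D_α(P‖Q) ≤ ρα` for all `α > 1`, then they satisfy the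
`(ρ + 2√(ρ log(1/δ)), δ)`-differential privacy guarantee for every `δ > 0`. -/
theorem stmt_12 {O : Type*} [Fintype O] (ρ : ℝ) (hρ : 0 ≤ ρ)
    (P Q : O → ℝ) (hP0 : ∀ x, 0 < P x) (hQ0 : ∀ x, 0 < Q x)
    (hP1 : ∑ x : O, P x = 1) (hQ1 : ∑ x : O, Q x = 1)
    (hzCDP : ∀ α : ℝ, 1 < α →
      (1 / (α - 1)) * Real.log (∑ x : O, P x ^ α * Q x ^ (1 - α)) ≤ ρ * α)
    (δ : ℝ) (hδ : 0 < δ) :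
    ∀ S : Finset O,
      ∑ x ∈ S, P x ≤ Real.exp (ρ + 2 * Real.sqrt (ρ * Real.log (1 / δ))) * ∑ x ∈ S, Q x + δ := by
  intro S
  have hO : Nonempty O := by
    rcases isEmpty_or_nonempty O with h | h
    · exfalso; rw [Finset.univ_eq_empty, Finset.sum_empty] at hP1; norm_num at hP1
    · exact h
  have hQS : (0:ℝ) ≤ ∑ x ∈ S, Q x := Finset.sum_nonneg fun x _ => (hQ0 x).le
  have hε : (0:ℝ) ≤ ρ + 2 * Real.sqrt (ρ * Real.log (1 / δ)) := by positivity
  have hεQ : (0:ℝ) ≤ Real.exp (ρ + 2 * Real.sqrt (ρ * Real.log (1 / δ))) * ∑ x ∈ S, Q x :=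
    mul_nonneg (Real.exp_pos _).le hQS
  have hPS1 : ∑ x ∈ S, P x ≤ 1 := by
    rw [← hP1]
    exact Finset.sum_le_sum_of_subset_of_nonneg (Finset.subset_univ S) fun x _ _ => (hP0 x).le
  by_cases hδ1 : 1 ≤ δ
  · linarith
  push_neg at hδ1
  have hL : 0 < Real.log (1 / δ) := Real.log_pos (by rw [lt_div_iff₀ hδ]; linarith)
  rcases eq_or_lt_of_le hρ with hρ0 | hρ0
  · -- ρ = 0 : use large α and AM-GM
    have hα : (1:ℝ) < max 2 (1/δ) := lt_of_lt_of_le one_lt_two (le_max_left _ _)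
    have hα0 : (0:ℝ) < max 2 (1/δ) := by linarith
    have key := holder_key ρ P Q hP0 hQ0 hzCDP hO S (max 2 (1/δ)) hα
    rw [← hρ0] at key
    simp only [zero_mul, Real.exp_zero, one_mul] at key
    have hθ0 : 0 ≤ (max 2 (1/δ) - 1) / max 2 (1/δ) := div_nonneg (by linarith) hα0.le
    have hθ1 : (max 2 (1/δ) - 1) / max 2 (1/δ) + 1 / max 2 (1/δ) = 1 := by field_simp; ring
    have amgm : (∑ x ∈ S, Q x) ^ ((max 2 (1/δ) - 1) / max 2 (1/δ)) * 1 ^ ((1 / max 2 (1/δ)) : ℝ)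
        ≤ ((max 2 (1/δ) - 1) / max 2 (1/δ)) * (∑ x ∈ S, Q x) + (1 / max 2 (1/δ)) * 1 :=
      Real.geom_mean_le_arith_mean2_weighted hθ0 (by positivity) hQS zero_le_one hθ1
    rw [Real.one_rpow, mul_one, mul_one] at amgm
    have h1α : 1 / max 2 (1/δ) ≤ δ := by
      rw [div_le_iff₀ hα0, ← div_le_iff₀' hδ]
      exact le_max_right _ _
    have hθc : ((max 2 (1/δ) - 1) / max 2 (1/δ)) * (∑ x ∈ S, Q x) ≤ ∑ x ∈ S, Q x := by
      have h : (max 2 (1/δ) - 1) / max 2 (1/δ) ≤ 1 := by rw [div_le_one hα0]; linarith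
      nlinarith
    have hcle : ∑ x ∈ S, Q x ≤ Real.exp (ρ + 2 * Real.sqrt (ρ * Real.log (1 / δ))) * ∑ x ∈ S, Q x :=
      le_mul_of_one_le_left hQS (Real.one_le_exp hε)
    linarith
  · -- ρ > 0
    obtain ⟨s, hsdef⟩ : ∃ s, s = Real.sqrt (ρ * Real.log (1 / δ)) := ⟨_, rfl⟩
    rw [← hsdef]
    rw [← hsdef] at hε hεQ
    have hs0 : 0 < s := hsdef ▸ Real.sqrt_pos.2 (by positivity)
    have hs2 : s ^ 2 = ρ * Real.log (1 / δ) := by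
      rw [hsdef]; exact Real.sq_sqrt (by positivity)
    have hα : 1 < 1 + s / ρ := by nlinarith [div_pos hs0 hρ0]
    have hα0 : (0:ℝ) < 1 + s / ρ := by linarith
    have key := holder_key ρ P Q hP0 hQ0 hzCDP hO S (1 + s / ρ) hα
    have hρα : ρ * (1 + s / ρ - 1) = s := by field_simp; ring
    rw [hρα] at key
    have hθ : (1 + s / ρ - 1) / (1 + s / ρ) = s / (ρ + s) := by
      rw [div_eq_div_iff (by linarith) (by linarith)]
      field_simp; ring
    rw [hθ] at key
    rcases eq_or_lt_of_le hQS with hc0 | hc0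
    · -- sum Q = 0
      rw [← hc0, Real.zero_rpow (ne_of_gt (div_pos hs0 (by linarith))), mul_zero] at key
      linarith
    · -- sum Q > 0
      have hcθ : (∑ x ∈ S, Q x) ^ (s / (ρ + s))
          = Real.exp ((s / (ρ + s)) * Real.log (∑ x ∈ S, Q x)) := by
        rw [mul_comm, Real.rpow_def_of_pos hc0]
      rw [hcθ, ← Real.exp_add] at key
      by_cases hB : Real.exp (s + (s / (ρ + s)) * Real.log (∑ x ∈ S, Q x)) ≤ δ
      · linarith
      · push_neg at hB
        have hBl : Real.log δ < s + (s / (ρ + s)) * Real.log (∑ x ∈ S, Q x) := by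
          have := Real.log_lt_log hδ hB
          rwa [Real.log_exp] at this
        have hlogδ : Real.log δ = -Real.log (1 / δ) := by
          rw [one_div, Real.log_inv, neg_neg]
        have hBl' : -Real.log (1 / δ) - s < (s / (ρ + s)) * Real.log (∑ x ∈ S, Q x) := by
          rw [hlogδ] at hBl; linarith
        have hmain := arith_key ρ s (Real.log (1 / δ)) (Real.log (∑ x ∈ S, Q x)) hρ0 hs0 hs2 hBl'
        have hexp := Real.exp_le_exp.2 hmain
        calc ∑ x ∈ S, P x
            ≤ Real.exp (s + (s / (ρ + s)) * Real.log (∑ x ∈ S, Q x)) := key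
          _ ≤ Real.exp ((ρ + 2 * s) + Real.log (∑ x ∈ S, Q x)) := hexp
          _ = Real.exp (ρ + 2 * s) * ∑ x ∈ S, Q x := by
              rw [Real.exp_add, Real.exp_log hc0]
          _ ≤ _ := by linarith
end

section
/- If X ~ Poisson(λ) with λ ≤ e^{-3}·log n and k satisfies kλ = log n with k ≥ e³, then Pr[|X - λ| ≥ kλ] ≤ (k/(k-1))·exp(-λ + kλ - kλ log k), and this bound is at most 1.1·n^{-2} for n ≥ 3. -/
open MeasureTheory ProbabilityTheory
open scoped Nat

/-- Poisson tail bound in the small-mean regime: if `X ~ Poisson(λ)` with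
`λ ≤ e⁻³ log n` and `kλ = log n` with `k ≥ e³`, then
`Pr[|X - λ| ≥ kλ] ≤ (k/(k-1))·exp(-λ + kλ - kλ log k) ≤ 1.1·n⁻²` for `n ≥ 3`. -/
theorem stmt_15 (lam : NNReal) (hlam : 0 < lam) (n : ℕ) (hn : 3 ≤ n) (k : ℝ)
    (hk : Real.exp 3 ≤ k)
    (hsmall : (lam : ℝ) ≤ Real.exp (-3) * Real.log n)
    (hklam : k * (lam : ℝ) = Real.log n) :
    poissonMeasure lam {x : ℕ | k * (lam : ℝ) ≤ |(x : ℝ) - (lam : ℝ)|}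
      ≤ ENNReal.ofReal ((k / (k - 1)) * Real.exp (-(lam : ℝ) + k * lam - k * lam * Real.log k)) ∧
    (k / (k - 1)) * Real.exp (-(lam : ℝ) + k * lam - k * lam * Real.log k)
      ≤ 1.1 * (n : ℝ)^(-2 : ℝ) := by
  have hlam0 : (0:ℝ) < lam := hlam
  have hk1 : (1:ℝ) < k := lt_of_lt_of_le (by
    calc (1:ℝ) = Real.exp 0 := (Real.exp_zero).symm
    _ < Real.exp 3 := Real.exp_lt_exp.mpr (by norm_num)) hk
  have hk0 : (0:ℝ) < k := lt_trans one_pos hk1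
  set t : ℝ := k * (lam : ℝ) with ht_def
  have ht : 0 < t := mul_pos hk0 hlam0
  have hlogk : 3 ≤ Real.log k := (Real.le_log_iff_exp_le hk0).mpr hk
  have hlamt : (lam : ℝ) < t := by
    have : (lam : ℝ) * 1 < (lam : ℝ) * k := mul_lt_mul_of_pos_left hk1 hlam0
    simpa [ht_def, mul_comm] using this
  set m : ℕ := ⌈t⌉₊ with hm_def
  have htm : t ≤ m := Nat.le_ceil t
  -- inclusion
  have hsub : {x : ℕ | t ≤ |(x : ℝ) - (lam : ℝ)|} ⊆ {x : ℕ | m ≤ x} := by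
    intro x hx
    simp only [Set.mem_setOf_eq] at hx ⊢
    rw [hm_def, Nat.ceil_le]
    rcases le_or_gt ((x:ℝ)) (lam : ℝ) with h | h
    · have habs : |(x : ℝ) - (lam : ℝ)| = (lam:ℝ) - x := by
        rw [abs_of_nonpos (by linarith)]; ring
      have hx0 : (0:ℝ) ≤ x := Nat.cast_nonneg x
      rw [habs] at hx; linarith
    · have habs : |(x : ℝ) - (lam : ℝ)| = (x:ℝ) - lam := abs_of_pos (by linarith)
      rw [habs] at hx; linarith
  -- termwise bound
  set C : ℝ := Real.exp (-(lam : ℝ) + t - t * Real.log k) with hC_def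
  have hC0 : 0 < C := Real.exp_pos _
  have hterm : ∀ j : ℕ, poissonPMFReal lam (m + j) ≤ C * (1/k)^j := by
    intro j
    unfold poissonPMFReal
    have hlameq : (lam : ℝ) = t / k := by rw [ht_def]; field_simp
    have h1 : (lam:ℝ) ^ (m+j) / ((m+j)! : ℝ)
        = t ^ (m+j) / ((m+j)! : ℝ) * ((1/k)^m * (1/k)^j) := by
      rw [hlameq, div_pow, ← pow_add]
      have : ((m+j)! : ℝ) ≠ 0 := Nat.cast_ne_zero.mpr (Nat.factorial_ne_zero _)
      field_simp
      rw [← mul_pow, mul_one_div_cancel hk0.ne', one_pow]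
    have h2 : t ^ (m+j) / ((m+j)! : ℝ) ≤ Real.exp t := by
      calc t ^ (m+j) / ((m+j)! : ℝ)
          ≤ ∑ i ∈ Finset.range (m+j+1), t ^ i / (i)! :=
            Finset.single_le_sum (f := fun i => t ^ i / (i)!)
              (fun i _ => by positivity) (Finset.self_mem_range_succ (m+j))
        _ ≤ Real.exp t := Real.sum_le_exp_of_nonneg ht.le _
    have h4 : (1/k:ℝ)^m ≤ Real.exp (-(t * Real.log k)) := by
      have he : (1/k:ℝ)^m = Real.exp (-((m:ℝ) * Real.log k)) := by
        rw [Real.exp_neg, Real.exp_nat_mul, Real.exp_log hk0, one_div, inv_pow]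
      rw [he]
      apply Real.exp_le_exp.mpr
      have : t * Real.log k ≤ (m:ℝ) * Real.log k :=
        mul_le_mul_of_nonneg_right htm (by linarith)
      linarith
    have hj0 : (0:ℝ) ≤ (1/k:ℝ)^j := by positivity
    calc Real.exp (-(lam:ℝ)) * (lam:ℝ) ^ (m+j) / ((m+j)! : ℝ)
        = Real.exp (-(lam:ℝ)) * ((lam:ℝ) ^ (m+j) / ((m+j)! : ℝ)) := by ring
      _ = Real.exp (-(lam:ℝ)) * (t ^ (m+j) / ((m+j)! : ℝ) * ((1/k)^m * (1/k)^j)) := by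
          rw [h1]
      _ ≤ Real.exp (-(lam:ℝ)) * (Real.exp t * (Real.exp (-(t * Real.log k)) * (1/k)^j)) := by
          apply mul_le_mul_of_nonneg_left _ (Real.exp_pos _).le
          apply mul_le_mul h2 (mul_le_mul_of_nonneg_right h4 hj0) (by positivity)
            (Real.exp_pos _).le
      _ = C * (1/k)^j := by
          rw [hC_def, show -(lam:ℝ) + t - t * Real.log k
            = -(lam:ℝ) + (t + -(t * Real.log k)) by ring, Real.exp_add, Real.exp_add]
          ring
  -- measure bound
  have hub : {x : ℕ | m ≤ x} ⊆ ⋃ j : ℕ, ({m + j} : Set ℕ) := by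
    intro x hx
    exact Set.mem_iUnion.mpr ⟨x - m, by simp [Nat.add_sub_cancel' hx]⟩
  have hsingle : ∀ a : ℕ, poissonMeasure lam {a} = ENNReal.ofReal (poissonPMFReal lam a) := by
    intro a
    rw [poissonMeasure_singleton]
    rfl
  have hr1 : ENNReal.ofReal (1/k) < 1 := by
    rw [← ENNReal.ofReal_one]
    exact ENNReal.ofReal_lt_ofReal_iff_of_nonneg (by positivity) |>.mpr
      (by rw [div_lt_one hk0]; exact hk1)
  have hmeas : poissonMeasure lam {x : ℕ | t ≤ |(x : ℝ) - (lam : ℝ)|}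
      ≤ ENNReal.ofReal (C * (k / (k-1))) := by
    calc poissonMeasure lam {x : ℕ | t ≤ |(x : ℝ) - (lam : ℝ)|}
        ≤ poissonMeasure lam (⋃ j : ℕ, ({m + j} : Set ℕ)) :=
          measure_mono (hsub.trans hub)
      _ ≤ ∑' j : ℕ, poissonMeasure lam ({m + j} : Set ℕ) := measure_iUnion_le _
      _ = ∑' j : ℕ, ENNReal.ofReal (poissonPMFReal lam (m + j)) := by
          simp only [hsingle]
      _ ≤ ∑' j : ℕ, ENNReal.ofReal (C * (1/k)^j) :=
          ENNReal.tsum_le_tsum (fun j => ENNReal.ofReal_le_ofReal (hterm j))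
      _ = ∑' j : ℕ, ENNReal.ofReal C * (ENNReal.ofReal (1/k))^j := by
          congr 1; ext j
          rw [ENNReal.ofReal_mul hC0.le, ENNReal.ofReal_pow (by positivity)]
      _ = ENNReal.ofReal C * (1 - ENNReal.ofReal (1/k))⁻¹ := by
          rw [ENNReal.tsum_mul_left, ENNReal.tsum_geometric]
      _ = ENNReal.ofReal (C * (k / (k-1))) := by
          rw [← ENNReal.ofReal_one, ← ENNReal.ofReal_sub _ (by positivity),
            ← ENNReal.ofReal_inv_of_pos (by rw [sub_pos, div_lt_one hk0]; exact hk1),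
            ← ENNReal.ofReal_mul hC0.le]
          congr 2
          rw [one_sub_div hk0.ne', inv_div]
  constructor
  · rw [mul_comm] at hmeas; exact hmeas
  -- second part
  · have hn0 : (0:ℝ) < n := by positivity
    have hlogn : t = Real.log n := hklam
    have hfrac : k / (k-1) ≤ 1.1 := by
      have h11 : (11:ℝ) ≤ k := by
        have h27 : (2.7:ℝ) < Real.exp 1 := by
          have := Real.exp_one_gt_d9; linarith
        have : (2.7:ℝ)^(3:ℕ) ≤ (Real.exp 1)^(3:ℕ) := by
          apply pow_le_pow_left₀ (by norm_num) h27.le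
        have he3 : Real.exp 3 = (Real.exp 1)^(3:ℕ) := by
          rw [← Real.exp_nat_mul]; norm_num
        nlinarith [hk, he3]
      rw [div_le_iff₀ (by linarith)]
      linarith
    have hexp2 : C ≤ (n : ℝ)^(-2 : ℝ) := by
      rw [hC_def]
      rw [Real.rpow_def_of_pos hn0]
      apply Real.exp_le_exp.mpr
      have h3t : 3 * t ≤ t * Real.log k := by
        nlinarith [ht, hlogk]
      rw [← hlogn]
      rw [ht_def] at h3t ht ⊢
      nlinarith [hlam0]
    calc (k / (k - 1)) * C
        ≤ 1.1 * (n : ℝ)^(-2 : ℝ) := mul_le_mul hfrac hexp2 (le_of_lt hC0) (by norm_num)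
end

section
/- If X ~ Poisson(λ) with λ ≥ e^{-3} log n and n ≥ 2, then Pr[|X - λ| ≥ 4√(λ log n)] ≤ 2n^{-1.84}. -/
open MeasureTheory ProbabilityTheory Real


lemma stmt16_nonneg_of_deriv (f f' : ℝ → ℝ) (a : ℝ)
    (hder : ∀ u, a ≤ u → HasDerivAt f (f' u) u)
    (h0 : f a = 0) (hpos : ∀ u, a < u → 0 ≤ f' u) : ∀ u, a ≤ u → 0 ≤ f u := by
  intro u hu
  have hmono : MonotoneOn f (Set.Ici a) := by
    apply monotoneOn_of_deriv_nonneg (convex_Ici a)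
    · intro v hv; exact ((hder v hv).continuousAt).continuousWithinAt
    · intro v hv
      rw [interior_Ici] at hv
      exact ((hder v (le_of_lt hv)).differentiableAt).differentiableWithinAt
    · intro v hv
      rw [interior_Ici] at hv
      rw [(hder v (le_of_lt hv)).deriv]
      exact hpos v hv
  have := hmono (Set.self_mem_Ici) hu hu
  linarith [h0 ▸ this]

lemma stmt16_log_ge_rat (u : ℝ) (hu : 0 ≤ u) : 3*u*(u+6)/(2*(u+3)^2) ≤ Real.log (1+u) := by
  have key := stmt16_nonneg_of_deriv
    (fun v => Real.log (1+v) - 3*v*(v+6)/(2*(v+3)^2))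
    (fun v => 1/(1+v) - 27/(v+3)^3) 0 ?_ (by norm_num) ?_ u hu
  · linarith
  · intro v hv
    have h1 : HasDerivAt (fun w : ℝ => 1 + w) 1 v := by
      simpa using (hasDerivAt_id v).const_add 1
    have hlog : HasDerivAt (fun w : ℝ => Real.log (1+w)) (1/(1+v)) v := by
      simpa using h1.log (by linarith)
    have hnum : HasDerivAt (fun w : ℝ => 3*w*(w+6)) (6*v+18) v := by
      have ha : HasDerivAt (fun w : ℝ => 3*w) 3 v := by simpa using (hasDerivAt_id v).const_mul 3
      have hb : HasDerivAt (fun w : ℝ => w+6) 1 v := by simpa using (hasDerivAt_id v).add_const 6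
      have := ha.mul hb
      exact this.congr_deriv (by ring)
    have hden : HasDerivAt (fun w : ℝ => 2*(w+3)^2) (4*(v+3)) v := by
      have hb : HasDerivAt (fun w : ℝ => w+3) 1 v := by simpa using (hasDerivAt_id v).add_const 3
      have := (hb.pow 2).const_mul 2
      exact this.congr_deriv (by ring)
    have hdiv : HasDerivAt (fun w : ℝ => 3*w*(w+6)/(2*(w+3)^2))
        (((6*v+18)*(2*(v+3)^2) - 3*v*(v+6)*(4*(v+3)))/(2*(v+3)^2)^2) v :=
      hnum.div hden (by positivity)
    have hsub := hlog.sub hdiv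
    refine hsub.congr_deriv ?_
    have h3 : (v+3) ≠ 0 := by linarith
    field_simp
    ring
  · intro v hv
    have hexp : 1/(1+v) - 27/(v+3)^3 = v^2*(v+9)/((1+v)*(v+3)^3) := by
      have h1 : (1+v) ≠ 0 := by linarith
      have h3 : (v+3) ≠ 0 := by linarith
      field_simp
      ring
    rw [hexp]; positivity

lemma stmt16_bernstein (u : ℝ) (hu : 0 ≤ u) : 3*u^2/(2*(u+3)) ≤ (1+u)*Real.log (1+u) - u := by
  have key := stmt16_nonneg_of_deriv
    (fun v => (1+v)*Real.log (1+v) - v - 3*v^2/(2*(v+3)))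
    (fun v => Real.log (1+v) - 3*v*(v+6)/(2*(v+3)^2)) 0 ?_ (by norm_num) ?_ u hu
  · linarith
  · intro v hv
    have h1 : HasDerivAt (fun w : ℝ => 1 + w) 1 v := by
      simpa using (hasDerivAt_id v).const_add 1
    have hlog : HasDerivAt (fun w : ℝ => Real.log (1+w)) (1/(1+v)) v := by
      simpa using h1.log (by linarith)
    have hprod : HasDerivAt (fun w : ℝ => (1+w)*Real.log (1+w))
        (1*Real.log (1+v) + (1+v)*(1/(1+v))) v := h1.mul hlog
    have hnum : HasDerivAt (fun w : ℝ => 3*w^2) (6*v) v := by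
      have := ((hasDerivAt_id v).pow 2).const_mul 3
      exact this.congr_deriv (by simp [id_eq]; ring)
    have hden : HasDerivAt (fun w : ℝ => 2*(w+3)) 2 v := by
      simpa using ((hasDerivAt_id v).add_const 3).const_mul 2
    have hdiv : HasDerivAt (fun w : ℝ => 3*w^2/(2*(w+3)))
        ((6*v*(2*(v+3)) - 3*v^2*2)/(2*(v+3))^2) v := hnum.div hden (by positivity)
    have hfin := (hprod.sub (hasDerivAt_id v)).sub hdiv
    refine hfin.congr_deriv ?_
    have h1' : (1+v) ≠ 0 := by linarith
    have h3 : (v+3) ≠ 0 := by linarith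
    field_simp
    ring
  · intro v hv
    linarith [stmt16_log_ge_rat v (le_of_lt hv)]

lemma stmt16_tangent (a : ℝ) (ha : 0 ≤ a) (u : ℝ) (hau : a ≤ u) :
    (1+a)*Real.log (1+a) - a + Real.log (1+a) * (u - a) ≤ (1+u)*Real.log (1+u) - u := by
  have key := stmt16_nonneg_of_deriv
    (fun v => (1+v)*Real.log (1+v) - v - Real.log (1+a)*(v-a) - ((1+a)*Real.log (1+a) - a))
    (fun v => Real.log (1+v) - Real.log (1+a)) a ?_ (by ring) ?_ u hau
  · linarith
  · intro v hv
    have hv0 : 0 ≤ v := le_trans ha hv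
    have h1 : HasDerivAt (fun w : ℝ => 1 + w) 1 v := by
      simpa using (hasDerivAt_id v).const_add 1
    have hlog : HasDerivAt (fun w : ℝ => Real.log (1+w)) (1/(1+v)) v := by
      simpa using h1.log (by linarith)
    have hprod : HasDerivAt (fun w : ℝ => (1+w)*Real.log (1+w))
        (1*Real.log (1+v) + (1+v)*(1/(1+v))) v := h1.mul hlog
    have hlin : HasDerivAt (fun w : ℝ => Real.log (1+a)*(w-a)) (Real.log (1+a)) v := by
      simpa using ((hasDerivAt_id v).sub_const a).const_mul (Real.log (1+a))
    have hfin := ((hprod.sub (hasDerivAt_id v)).sub hlin).sub_const ((1+a)*Real.log (1+a) - a)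
    refine hfin.congr_deriv ?_
    have h1' : (1+v) ≠ 0 := by linarith
    field_simp
    ring
  · intro v hv
    have : Real.log (1+a) ≤ Real.log (1+v) :=
      Real.log_le_log (by linarith) (by linarith)
    linarith

lemma stmt16_core (u : ℝ) (h0 : 0 ≤ u) (h1 : u ≤ 17.928) :
    0.115*u^2 ≤ (1+u)*Real.log (1+u) - u := by
  have l2 := Real.log_two_gt_d9
  rcases le_or_gt u 7 with h7 | h7
  · have b := stmt16_bernstein u h0
    have : 0.115*u^2 ≤ 3*u^2/(2*(u+3)) := by
      rw [le_div_iff₀ (by positivity)]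
      nlinarith [sq_nonneg u]
    linarith
  · rcases le_or_gt u 15 with h15 | h15
    · have l8 : (2.0794415409:ℝ) ≤ Real.log 8 := by
        have h8 : (8:ℝ) = 2^3 := by norm_num
        rw [h8, Real.log_pow]
        push_cast
        nlinarith
      have t := stmt16_tangent 7 (by norm_num) u (le_of_lt h7)
      norm_num at t
      have p : (2.0794415409:ℝ)*(u-7) ≤ Real.log 8 * (u-7) :=
        mul_le_mul_of_nonneg_right l8 (by linarith)
      have hb : (2.0794415409:ℝ)*(u+1) - 7 ≤ (1+u)*Real.log (1+u) - u := by
        linarith [l8, t, p]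
      nlinarith [mul_nonneg (by linarith : (0:ℝ) ≤ u - 7) (by linarith : (0:ℝ) ≤ 15 - u)]
    · have l16 : (2.7725887212:ℝ) ≤ Real.log 16 := by
        have h16 : (16:ℝ) = 2^4 := by norm_num
        rw [h16, Real.log_pow]
        push_cast
        nlinarith
      have t := stmt16_tangent 15 (by norm_num) u (le_of_lt h15)
      norm_num at t
      have p : (2.7725887212:ℝ)*(u-15) ≤ Real.log 16 * (u-15) :=
        mul_le_mul_of_nonneg_right l16 (by linarith)
      have hb : (2.7725887212:ℝ)*(u+1) - 15 ≤ (1+u)*Real.log (1+u) - u := by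
        linarith [l16, t, p]
      nlinarith [mul_nonneg (by linarith : (0:ℝ) ≤ u - 15) (by linarith : (0:ℝ) ≤ 17.928 - u)]

lemma stmt16_chernoff (r : NNReal) (θ a : ℝ) (S : Set ℕ)
    (hS : ∀ k ∈ S, 0 ≤ θ * ((k:ℝ) - a)) :
    poissonMeasure r S ≤ ENNReal.ofReal (Real.exp ((r:ℝ) * (Real.exp θ - 1) - θ * a)) := by
  set w : ℕ → ℝ := fun k => Real.exp (θ*((k:ℝ)-a)) * poissonPMFReal r k with hwdef
  have hwnn : ∀ k, 0 ≤ w k := fun k =>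
    mul_nonneg (Real.exp_nonneg _) poissonPMFReal_nonneg
  have hw : HasSum w (Real.exp ((r:ℝ)*(Real.exp θ - 1) - θ*a)) := by
    have base : HasSum (fun k : ℕ => ((r:ℝ)*Real.exp θ)^k / k.factorial)
        (Real.exp ((r:ℝ)*Real.exp θ)) := by
      rw [Real.exp_eq_exp_ℝ]
      exact NormedSpace.expSeries_div_hasSum_exp _
    have hmul := base.mul_left (Real.exp (-θ*a - (r:ℝ)))
    suffices e : w = (fun i => Real.exp (-θ*a - (r:ℝ)) * (((r:ℝ)*Real.exp θ)^i / i.factorial)) ∧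
        Real.exp ((r:ℝ)*(Real.exp θ - 1) - θ*a) = Real.exp (-θ*a - (r:ℝ)) * Real.exp ((r:ℝ)*Real.exp θ) by
      rw [e.1, e.2]; exact hmul
    refine ⟨?_, ?_⟩
    · funext k
      simp only [hwdef, poissonPMFReal, mul_pow, ← Real.exp_nat_mul]
      rw [show Real.exp (-θ*a - (r:ℝ)) * ((r:ℝ)^k * Real.exp ((k:ℝ)*θ) / k.factorial)
            = (Real.exp (-θ*a - (r:ℝ)) * Real.exp ((k:ℝ)*θ)) * (r:ℝ)^k / k.factorial by ring,
          ← Real.exp_add]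
      rw [show Real.exp (θ*((k:ℝ)-a)) * (Real.exp (-(r:ℝ)) * (r:ℝ)^k / k.factorial)
            = (Real.exp (θ*((k:ℝ)-a)) * Real.exp (-(r:ℝ))) * (r:ℝ)^k / k.factorial by ring,
          ← Real.exp_add]
      ring_nf
    · rw [← Real.exp_add]
      ring_nf
  have step1 : poissonMeasure r S = ∑' k, S.indicator (⇑(poissonPMF r)) k := by
    rw [poissonMeasure, Measure.sum_apply _ MeasurableSet.of_discrete]
    refine tsum_congr fun k => ?_
    rw [Measure.smul_apply, Measure.dirac_apply' _ MeasurableSet.of_discrete]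
    by_cases hk : k ∈ S <;> simp [hk, ← poissonPMFReal_ofReal_eq_poissonPMF, poissonPMFReal]
  rw [step1]
  calc ∑' k, S.indicator (⇑(poissonPMF r)) k
      ≤ ∑' k, ENNReal.ofReal (w k) := by
        apply ENNReal.tsum_le_tsum
        intro k
        by_cases hk : k ∈ S
        · rw [Set.indicator_of_mem hk]
          show ENNReal.ofReal (poissonPMFReal r k) ≤ _
          apply ENNReal.ofReal_le_ofReal
          have h1 : (1:ℝ) ≤ Real.exp (θ*((k:ℝ)-a)) := Real.one_le_exp (hS k hk)
          exact le_mul_of_one_le_left poissonPMFReal_nonneg h1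
        · rw [Set.indicator_of_notMem hk]; exact zero_le'
    _ = ENNReal.ofReal (∑' k, w k) := (ENNReal.ofReal_tsum_of_nonneg hwnn hw.summable).symm
    _ = _ := by rw [hw.tsum_eq]

set_option maxHeartbeats 1000000 in
/-- Poisson tail bound in the large-mean regime: if `X ~ Poisson(λ)` with `λ ≥ e⁻³ log n`
and `n ≥ 2`, then `Pr[|X - λ| ≥ 4√(λ log n)] ≤ 2n^{-1.84}`. -/
theorem stmt_16 (lam : NNReal) (hlam : 0 < lam) (n : ℕ) (hn : 2 ≤ n)
    (hbig : Real.exp (-3) * Real.log n ≤ (lam : ℝ)) :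
    poissonMeasure lam {x : ℕ | 4 * Real.sqrt ((lam : ℝ) * Real.log n) ≤ |(x : ℝ) - (lam : ℝ)|}
      ≤ ENNReal.ofReal (2 * (n : ℝ)^(-1.84 : ℝ)) := by
  have hlr : (0:ℝ) < (lam:ℝ) := by exact_mod_cast hlam
  set lr : ℝ := (lam:ℝ) with hlrdef
  set L : ℝ := Real.log n with hLdef
  clear_value lr
  have hn1 : (1:ℝ) < (n:ℝ) := by exact_mod_cast hn.trans_lt' one_lt_two
  have hL0 : 0 < L := hLdef ▸ Real.log_pos hn1
  clear_value L
  set x : ℝ := 4 * Real.sqrt (lr * L) with hxdef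
  have hx0 : 0 < x := by
    have : 0 < Real.sqrt (lr * L) := Real.sqrt_pos.mpr (by positivity)
    positivity
  have hx2 : x^2 = 16*(lr*L) := by
    rw [hxdef, mul_pow, Real.sq_sqrt (by positivity)]; ring
  clear_value x
  set u : ℝ := x / lr with hudef
  have hu0 : 0 < u := div_pos hx0 hlr
  have hux : lr * u = x := by rw [hudef]; field_simp
  have hu2 : lr * u^2 = 16*L := by
    rw [hudef]; field_simp; nlinarith [hx2]
  clear_value u
  -- u ≤ 17.928
  have hexp3 : Real.exp 3 < 20.086 := by
    have h1 : Real.exp 3 = (Real.exp 1)^3 := by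
      rw [← Real.exp_nat_mul]; norm_num
    have h2 := Real.exp_one_lt_d9
    have hb : (2.7182818286:ℝ)^3 < 20.086 := by norm_num
    rw [h1]
    calc (Real.exp 1)^3 < (2.7182818286:ℝ)^3 :=
          pow_lt_pow_left₀ h2 (Real.exp_pos 1).le (by norm_num)
      _ < 20.086 := hb
  have hLlr : L ≤ lr * Real.exp 3 := by
    have h := mul_le_mul_of_nonneg_left hbig (Real.exp_pos 3).le
    rw [← mul_assoc, ← Real.exp_add] at h
    norm_num at h
    nlinarith [h]
  have hub : u ≤ 17.928 := by
    have h1 : lr * u^2 ≤ lr * (Real.exp 3 * 16) := by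
      rw [hu2]; nlinarith [hLlr]
    have h2 : u^2 ≤ Real.exp 3 * 16 := le_of_mul_le_mul_left h1 hlr
    nlinarith [hexp3, hu0.le]
  -- event inclusion
  have hincl : {k : ℕ | x ≤ |(k:ℝ) - lr|}
      ⊆ {k : ℕ | lr + x ≤ (k:ℝ)} ∪ {k : ℕ | (k:ℝ) ≤ lr - x} := by
    intro k hk
    have hk' : x ≤ |(k:ℝ) - lr| := hk
    rcases le_abs.mp hk' with h | h
    · left; simp only [Set.mem_setOf_eq]; linarith
    · right; simp only [Set.mem_setOf_eq]; linarith
  refine le_trans (measure_mono hincl) (le_trans (measure_union_le _ _) ?_)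
  -- upper tail
  have tail1 : poissonMeasure lam {k : ℕ | lr + x ≤ (k:ℝ)}
      ≤ ENNReal.ofReal (Real.exp (-(1.84*L))) := by
    have hθ : 0 ≤ Real.log (1+u) := Real.log_nonneg (by linarith)
    have hc := stmt16_chernoff lam (Real.log (1+u)) (lr + x) _
      (fun k hk => mul_nonneg hθ (by have hk' : lr + x ≤ (k:ℝ) := hk; linarith))
    rw [← hlrdef] at hc
    refine hc.trans (ENNReal.ofReal_le_ofReal (Real.exp_le_exp.mpr ?_))
    rw [Real.exp_log (by linarith : (0:ℝ) < 1+u)]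
    have hcore := stmt16_core u hu0.le hub
    have hmul := mul_le_mul_of_nonneg_left hcore hlr.le
    -- lr * (0.115 u²) ≤ lr*((1+u) log(1+u) - u)
    have e1 : lr * (0.115*u^2) = 1.84 * L := by
      rw [show lr * (0.115*u^2) = 0.115*(lr*u^2) by ring, hu2]; ring
    have e2 : lr * (1 + u - 1) - Real.log (1+u) * (lr + x)
        = -(lr * ((1+u)*Real.log (1+u) - u)) := by
      rw [← hux]; ring
    rw [e2]
    linarith [e1 ▸ hmul]
  -- lower tail
  have tail2 : poissonMeasure lam {k : ℕ | (k:ℝ) ≤ lr - x}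
      ≤ ENNReal.ofReal (Real.exp (-(1.84*L))) := by
    obtain ⟨t, htdef⟩ : ∃ t:ℝ, t = x/(2*lr) := ⟨_, rfl⟩
    have ht0 : 0 < t := by rw [htdef]; positivity
    have hc := stmt16_chernoff lam (-t) (lr - x) _
      (fun k hk => by
        have hk' : (k:ℝ) ≤ lr - x := hk
        nlinarith [mul_nonneg ht0.le (sub_nonneg.2 hk')])
    rw [← hlrdef] at hc
    refine hc.trans (ENNReal.ofReal_le_ofReal (Real.exp_le_exp.mpr ?_))
    -- exp(-t) ≤ 1 - t + t²
    have hEF : Real.exp (-t) * Real.exp t = 1 := by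
      rw [← Real.exp_add]; simp
    have hquad : (0:ℝ) ≤ 1 - t + t^2 := by nlinarith [sq_nonneg (2*t - 1)]
    have h3 : (1:ℝ) ≤ (1 - t + t^2) * Real.exp t := by
      nlinarith [mul_nonneg hquad (sub_nonneg.2 (Real.add_one_le_exp t)), pow_nonneg ht0.le 3]
    have hE : Real.exp (-t) ≤ 1 - t + t^2 := by
      nlinarith [Real.exp_pos t, hEF, h3]
    have htx : t * x = 8*L := by
      rw [htdef]; field_simp; linear_combination hx2
    have hlt2 : lr * t^2 = 4*L := by
      rw [htdef]; field_simp; linear_combination hx2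
    have hmul := mul_le_mul_of_nonneg_left hE hlr.le
    have goal1 : lr * (Real.exp (-t) - 1) - (-t) * (lr - x) ≤ -(4*L) := by
      nlinarith [hmul, htx, hlt2]
    have : -(4*L) ≤ -(1.84*L) := by linarith
    linarith
  -- combine
  have hrpow : (n:ℝ)^(-1.84 : ℝ) = Real.exp (-(1.84*L)) := by
    rw [Real.rpow_def_of_pos (by linarith : (0:ℝ) < (n:ℝ)), ← hLdef]
    ring_nf
  calc poissonMeasure lam {k : ℕ | lr + x ≤ (k:ℝ)}
        + poissonMeasure lam {k : ℕ | (k:ℝ) ≤ lr - x}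
      ≤ ENNReal.ofReal (Real.exp (-(1.84*L))) + ENNReal.ofReal (Real.exp (-(1.84*L))) :=
        add_le_add tail1 tail2
    _ = ENNReal.ofReal (2 * (n:ℝ)^(-1.84 : ℝ)) := by
        rw [← ENNReal.ofReal_add (Real.exp_nonneg _) (Real.exp_nonneg _), hrpow]
        ring_nf
end
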